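/- Let u: ℝ² → ℝ be four times continuously differentiable and let (x,y) ∈ ℝ². Then the higher-order dangling-node approximation of u_yy is second-order accurate: the quantity [u(x+h/2, y+h) + u(x−h/2, y+h) + u(x+h/2, y−h) + u(x−h/2, y−h) − 2u(x+h/2, y) − 2u(x−h/2, y)]/(2h²) − u_yy(x,y) is O(h²) as h → 0⁺; that is, there exist constants C > 0 and h₀ > 0 such that its absolute value is at most C h² for all 0 < h < h₀. -/

import Mathlib

open Set

private lemma aux_line_contDiff {u : ℝ × ℝ → ℝ} (hu : ContDiff ℝ 4 u) (c w : ℝ × ℝ) :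
    ContDiff ℝ 4 (fun t : ℝ => u (c + t • w)) :=
  hu.comp (contDiff_const.add (contDiff_id.smul contDiff_const))

private lemma aux_line_hasDerivAt {u : ℝ × ℝ → ℝ} (hu : Differentiable ℝ u) (c w : ℝ × ℝ)
    (t : ℝ) :
    HasDerivAt (fun s : ℝ => u (c + s • w)) (fderiv ℝ u (c + t • w) w) t := by
  have h1 : HasDerivAt (fun s : ℝ => c + s • w) w t := by
    simpa using ((hasDerivAt_id t).smul_const w).const_add c
  exact (hu (c + t • w)).hasFDerivAt.comp_hasDerivAt t h1

private lemma aux_line2_hasDerivAt {u : ℝ × ℝ → ℝ}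
    (hu : Differentiable ℝ (fderiv ℝ u)) (c w : ℝ × ℝ) :
    HasDerivAt (fun t : ℝ => fderiv ℝ u (c + t • w) w)
      (fderiv ℝ (fderiv ℝ u) c w w) 0 := by
  have h1 : HasDerivAt (fun s : ℝ => c + s • w) w 0 := by
    simpa using ((hasDerivAt_id (0:ℝ)).smul_const w).const_add c
  have h2 : HasDerivAt (fun t : ℝ => fderiv ℝ u (c + t • w))
      (fderiv ℝ (fderiv ℝ u) c w) 0 := by
    have := (hu (c + (0:ℝ) • w)).hasFDerivAt.comp_hasDerivAt 0 h1
    rw [zero_smul, add_zero] at this; exact this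
  have h3 := h2.clm_apply (hasDerivAt_const (0:ℝ) w)
  simpa using h3

private lemma aux_iDW_eq {F : ℝ → ℝ} (hF : ContDiff ℝ 4 F) {s : Set ℝ}
    (hs : UniqueDiffOn ℝ s) {k : ℕ} (hk : (k : ℕ∞) ≤ 4) {t : ℝ} (ht : t ∈ s) :
    iteratedDerivWithin k F s t = iteratedDeriv k F t := by
  have H : HasFTaylorSeriesUpToOn 4 F (ftaylorSeries ℝ F) s :=
    (hasFTaylorSeriesUpToOn_univ_iff.2 (contDiff_iff_ftaylorSeries.mp hF)).mono (subset_univ s)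
  have h1 : ftaylorSeries ℝ F t k = iteratedFDerivWithin ℝ k F s t :=
    H.eq_iteratedFDerivWithin_of_uniqueDiffOn (by exact_mod_cast hk) hs ht
  rw [iteratedDerivWithin_eq_iteratedFDerivWithin, iteratedDeriv_eq_iteratedFDeriv, ← h1]
  rfl

private lemma aux_iteratedDeriv_two {f : ℝ → ℝ} (t : ℝ) :
    iteratedDeriv 2 f t = deriv (deriv f) t := by
  rw [show (2:ℕ) = 1 + 1 from rfl, iteratedDeriv_succ, iteratedDeriv_one]

/-- The dangling-node approximation of `u_yy` is second-order
accurate for `C⁴` functions. -/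
theorem dangling_node_uyy_second_order
    (u : ℝ × ℝ → ℝ) (hu : ContDiff ℝ 4 u) (x y : ℝ) :
    ∃ C > (0:ℝ), ∃ h₀ > (0:ℝ), ∀ h : ℝ, 0 < h → h < h₀ →
      |(u (x + h/2, y + h) + u (x - h/2, y + h) + u (x + h/2, y - h)
          + u (x - h/2, y - h) - 2 * u (x + h/2, y) - 2 * u (x - h/2, y))
            / (2 * h^2)
        - iteratedFDeriv ℝ 2 u (x, y) ![(0, 1), (0, 1)]| ≤ C * h^2 := by
  have hu1 : Differentiable ℝ u := hu.differentiable (by norm_num)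
  have hDu : Differentiable ℝ (fderiv ℝ u) :=
    (hu.fderiv_right (m := 3) (by norm_num)).differentiable (by norm_num)
  set c : ℝ × ℝ := (x, y) with hc
  set v1 : ℝ × ℝ := (1/2, 1) with hv1
  set v2 : ℝ × ℝ := (-(1/2), 1) with hv2
  set v3 : ℝ × ℝ := (1/2, -1) with hv3
  set v4 : ℝ × ℝ := (-(1/2), -1) with hv4
  set v5 : ℝ × ℝ := (1/2, 0) with hv5
  set v6 : ℝ × ℝ := (-(1/2), 0) with hv6
  set F : ℝ → ℝ := fun t => u (c + t • v1) + u (c + t • v2) + u (c + t • v3)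
      + u (c + t • v4) - 2 * u (c + t • v5) - 2 * u (c + t • v6) with hFdef
  have hF : ContDiff ℝ 4 F := by
    have := ((((((aux_line_contDiff hu c v1).add (aux_line_contDiff hu c v2)).add
      (aux_line_contDiff hu c v3)).add (aux_line_contDiff hu c v4)).sub
      ((aux_line_contDiff hu c v5).const_smul (2:ℝ))).sub
      ((aux_line_contDiff hu c v6).const_smul (2:ℝ)))
    simpa only [smul_eq_mul] using this
  -- F is even
  have hFe : ∀ t : ℝ, F (-t) = F t := by
    intro t
    have e1 : c + (-t) • v1 = c + t • v4 := by
      simp only [hv1, hv4, hc, Prod.mk_add_mk, Prod.smul_mk, smul_eq_mul, Prod.mk.injEq]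
      constructor <;> ring
    have e2 : c + (-t) • v2 = c + t • v3 := by
      simp only [hv2, hv3, hc, Prod.mk_add_mk, Prod.smul_mk, smul_eq_mul, Prod.mk.injEq]
      constructor <;> ring
    have e3 : c + (-t) • v3 = c + t • v2 := by
      simp only [hv2, hv3, hc, Prod.mk_add_mk, Prod.smul_mk, smul_eq_mul, Prod.mk.injEq]
      constructor <;> ring
    have e4 : c + (-t) • v4 = c + t • v1 := by
      simp only [hv1, hv4, hc, Prod.mk_add_mk, Prod.smul_mk, smul_eq_mul, Prod.mk.injEq]
      constructor <;> ring
    have e5 : c + (-t) • v5 = c + t • v6 := by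
      simp only [hv5, hv6, hc, Prod.mk_add_mk, Prod.smul_mk, smul_eq_mul, Prod.mk.injEq]
      constructor <;> ring
    have e6 : c + (-t) • v6 = c + t • v5 := by
      simp only [hv5, hv6, hc, Prod.mk_add_mk, Prod.smul_mk, smul_eq_mul, Prod.mk.injEq]
      constructor <;> ring
    simp only [hFdef, e1, e2, e3, e4, e5, e6]
    ring
  have hodd : ∀ n : ℕ, Odd n → iteratedDeriv n F 0 = 0 := by
    intro n hn
    have h1 : (fun t : ℝ => F (-t)) = F := funext hFe
    have h2 := iteratedDeriv_comp_neg n F 0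
    rw [h1, neg_zero, hn.neg_one_pow, smul_eq_mul] at h2
    linarith
  have hF0 : F 0 = 0 := by simp [hFdef]; ring
  -- second derivative computation
  set Q : ℝ := iteratedFDeriv ℝ 2 u (x, y) ![(0, 1), (0, 1)] with hQ
  set D2 := fderiv ℝ (fderiv ℝ u) c with hD2
  set G : ℝ → ℝ := fun t => fderiv ℝ u (c + t • v1) v1 + fderiv ℝ u (c + t • v2) v2
      + fderiv ℝ u (c + t • v3) v3 + fderiv ℝ u (c + t • v4) v4
      - 2 * fderiv ℝ u (c + t • v5) v5 - 2 * fderiv ℝ u (c + t • v6) v6 with hGdef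
  have hderivF : deriv F = G := by
    funext t
    exact ((((((aux_line_hasDerivAt hu1 c v1 t).add (aux_line_hasDerivAt hu1 c v2 t)).add
      (aux_line_hasDerivAt hu1 c v3 t)).add (aux_line_hasDerivAt hu1 c v4 t)).sub
      ((aux_line_hasDerivAt hu1 c v5 t).const_mul (2:ℝ))).sub
      ((aux_line_hasDerivAt hu1 c v6 t).const_mul (2:ℝ))).deriv
  have hG0 : HasDerivAt G (D2 v1 v1 + D2 v2 v2 + D2 v3 v3 + D2 v4 v4
      - 2 * (D2 v5 v5) - 2 * (D2 v6 v6)) 0 :=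
    ((((((aux_line2_hasDerivAt hDu c v1).add (aux_line2_hasDerivAt hDu c v2)).add
      (aux_line2_hasDerivAt hDu c v3)).add (aux_line2_hasDerivAt hDu c v4)).sub
      ((aux_line2_hasDerivAt hDu c v5).const_mul (2:ℝ))).sub
      ((aux_line2_hasDerivAt hDu c v6).const_mul (2:ℝ)))
  have hsum : D2 v1 v1 + D2 v2 v2 + D2 v3 v3 + D2 v4 v4
      - 2 * (D2 v5 v5) - 2 * (D2 v6 v6) = 4 * Q := by
    have expand : ∀ a b : ℝ, D2 (a, b) (a, b)
        = a * a * D2 (1, 0) (1, 0) + a * b * D2 (1, 0) (0, 1)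
          + b * a * D2 (0, 1) (1, 0) + b * b * D2 (0, 1) (0, 1) := by
      intro a b
      have hab : ((a, b) : ℝ × ℝ) = a • ((1:ℝ), (0:ℝ)) + b • ((0:ℝ), (1:ℝ)) := by
        simp [Prod.ext_iff]
      rw [hab, map_add, map_smul, map_smul]
      simp only [ContinuousLinearMap.add_apply, ContinuousLinearMap.coe_smul',
        Pi.smul_apply, map_add, map_smul, smul_eq_mul]
      ring
    have hQ2 : Q = D2 (0, 1) (0, 1) := by
      rw [hQ, iteratedFDeriv_two_apply]
      simp [hD2, hc]
    have E1 := expand (1/2) 1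
    have E2 := expand (-(1/2)) 1
    have E3 := expand (1/2) (-1)
    have E4 := expand (-(1/2)) (-1)
    have E5 := expand (1/2) 0
    have E6 := expand (-(1/2)) 0
    rw [hv1, hv2, hv3, hv4, hv5, hv6, hQ2, E1, E2, E3, E4, E5, E6]
    ring
  have hF2 : iteratedDeriv 2 F 0 = 4 * Q := by
    rw [aux_iteratedDeriv_two, hderivF, hG0.deriv, hsum]
  -- bound on the fourth derivative
  have hc4 : ContinuousOn (iteratedDeriv 4 F) (Icc (0:ℝ) 1) :=
    (hF.continuous_iteratedDeriv 4 (by norm_num)).continuousOn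
  obtain ⟨M, hM⟩ := (isCompact_Icc).exists_bound_of_continuousOn hc4
  refine ⟨(|M| + 1) / 48, by positivity, 1, one_pos, ?_⟩
  intro h hh0 hh1
  have hIcc : UniqueDiffOn ℝ (Icc (0:ℝ) h) := uniqueDiffOn_Icc hh0
  have hcd : ContDiffOn ℝ 3 F (Icc (0:ℝ) h) := (hF.of_le (by norm_num)).contDiffOn
  have hdiff : DifferentiableOn ℝ (iteratedDerivWithin 3 F (Icc (0:ℝ) h)) (Ioo (0:ℝ) h) :=
    (hF.contDiffOn.differentiableOn_iteratedDerivWithin (by norm_num) hIcc).mono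
      Ioo_subset_Icc_self
  obtain ⟨ξ, hξ, hTay⟩ := taylor_mean_remainder_lagrange hh0.ne
    (by rwa [uIcc_of_le hh0.le]) (by rwa [uIcc_of_le hh0.le, uIoo_of_lt hh0])
  rw [uIcc_of_le hh0.le] at hTay
  rw [uIoo_of_lt hh0] at hξ
  -- rewrite the Taylor polynomial
  have hT : taylorWithinEval F 3 (Icc (0:ℝ) h) 0 h = 2 * h^2 * Q := by
    rw [taylor_within_apply]
    have e0 := aux_iDW_eq hF hIcc (k := 0) (by norm_num) (left_mem_Icc.2 hh0.le)
    have e1 := aux_iDW_eq hF hIcc (k := 1) (by norm_num) (left_mem_Icc.2 hh0.le)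
    have e2 := aux_iDW_eq hF hIcc (k := 2) (by norm_num) (left_mem_Icc.2 hh0.le)
    have e3 := aux_iDW_eq hF hIcc (k := 3) (by norm_num) (left_mem_Icc.2 hh0.le)
    rw [Finset.sum_range_succ, Finset.sum_range_succ, Finset.sum_range_succ,
      Finset.sum_range_succ, Finset.sum_range_zero, e0, e1, e2, e3,
      iteratedDeriv_zero, hF0, hF2, hodd 1 (by decide), hodd 3 (by decide)]
    norm_num [Nat.factorial]
    ring
  have hξ4 : iteratedDerivWithin 4 F (Icc (0:ℝ) h) ξ = iteratedDeriv 4 F ξ :=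
    aux_iDW_eq hF hIcc (k := 4) (by norm_num) (Ioo_subset_Icc_self hξ)
  rw [hT, hξ4] at hTay
  have hMξ : |iteratedDeriv 4 F ξ| ≤ |M| := by
    have : ξ ∈ Icc (0:ℝ) 1 := ⟨hξ.1.le, le_trans hξ.2.le hh1.le⟩
    calc |iteratedDeriv 4 F ξ| ≤ M := by simpa using hM ξ this
    _ ≤ |M| := le_abs_self M
  -- final estimate
  have hFh : F h = u (x + h/2, y + h) + u (x - h/2, y + h) + u (x + h/2, y - h)
      + u (x - h/2, y - h) - 2 * u (x + h/2, y) - 2 * u (x - h/2, y) := by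
    have a1 : c + h • v1 = (x + h/2, y + h) := by
      simp only [hc, hv1, Prod.mk_add_mk, Prod.smul_mk, smul_eq_mul, Prod.mk.injEq]
      constructor <;> ring
    have a2 : c + h • v2 = (x - h/2, y + h) := by
      simp only [hc, hv2, Prod.mk_add_mk, Prod.smul_mk, smul_eq_mul, Prod.mk.injEq]
      constructor <;> ring
    have a3 : c + h • v3 = (x + h/2, y - h) := by
      simp only [hc, hv3, Prod.mk_add_mk, Prod.smul_mk, smul_eq_mul, Prod.mk.injEq]
      constructor <;> ring
    have a4 : c + h • v4 = (x - h/2, y - h) := by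
      simp only [hc, hv4, Prod.mk_add_mk, Prod.smul_mk, smul_eq_mul, Prod.mk.injEq]
      constructor <;> ring
    have a5 : c + h • v5 = (x + h/2, y) := by
      simp only [hc, hv5, Prod.mk_add_mk, Prod.smul_mk, smul_eq_mul, Prod.mk.injEq]
      constructor <;> ring
    have a6 : c + h • v6 = (x - h/2, y) := by
      simp only [hc, hv6, Prod.mk_add_mk, Prod.smul_mk, smul_eq_mul, Prod.mk.injEq]
      constructor <;> ring
    simp only [hFdef, a1, a2, a3, a4, a5, a6]
  have hne : (2 * h^2) ≠ 0 := by positivity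
  have key : |F h - 2 * h^2 * Q| ≤ |M| * h^4 / 24 := by
    rw [hTay]
    rw [abs_div, abs_mul]
    have : |(h - 0)^(3+1)| = h^4 := by
      rw [sub_zero, abs_pow, abs_of_pos hh0]
    rw [this]
    have h24 : |(((3+1).factorial : ℕ) : ℝ)| = 24 := by norm_num [Nat.factorial]
    rw [h24]
    gcongr
  calc |(u (x + h/2, y + h) + u (x - h/2, y + h) + u (x + h/2, y - h)
          + u (x - h/2, y - h) - 2 * u (x + h/2, y) - 2 * u (x - h/2, y))
            / (2 * h^2) - Q|
      = |F h - 2 * h^2 * Q| / (2 * h^2) := by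
        rw [← hFh,
          show F h / (2 * h^2) - Q = (F h - 2 * h^2 * Q) / (2 * h^2) by field_simp,
          abs_div, abs_of_pos (show (0:ℝ) < 2 * h^2 by positivity)]
    _ ≤ (|M| * h^4 / 24) / (2 * h^2) := by gcongr
    _ = (|M| / 48) * h^2 := by field_simp; ring
    _ ≤ ((|M| + 1) / 48) * h^2 := by gcongr; linarith
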